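/- arXiv:2101.09119 — 2 statements merged into one kernel-verified Lean document; each statement's English description precedes it below -/
import Mathlib

section
/- Let N be a normal subgroup of a group G, let w = y_1⋯y_n be a non-trivial reduced word with y_j = x_{i_j}^{ε_j}, ε_j ∈ {±1}, and consider tuples ḡ = (g_1,…,g_k) ∈ G^k and b̄ = (b_1,…,b_k) ∈ N^k. Then w(b̄ḡ) = a_1^{ε_1} a_2^{ε_2} ⋯ a_n^{ε_n} · w(ḡ), where a_j = (b_{i_j})^{w̃_j(ḡ)} for all j; in particular w(b̄ḡ) ∈ N·w(ḡ). -/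
/-! Words in free groups -/

/-- Evaluation of a word `w ∈ F_k` at a `k`-tuple of elements of `G`. -/
def wordEval {G : Type*} [Group G] {k : ℕ} (w : FreeGroup (Fin k)) (g : Fin k → G) : G :=
  FreeGroup.lift g w

/-- The length of (the reduced form of) a word in a free group. -/
def wordLength {k : ℕ} (w : FreeGroup (Fin k)) : ℕ :=
  (FreeGroup.toWord w).length

/-- `partialEval w g i` is the evaluation at `g` of the partial subword `w_i`
consisting of the first `i` letters of the reduced word `w`. -/
def partialEval {G : Type*} [Group G] {k : ℕ} (w : FreeGroup (Fin k)) (g : Fin k → G)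
    (i : ℕ) : G :=
  ((((FreeGroup.toWord w).take i).map fun y => if y.2 then g y.1 else (g y.1)⁻¹)).prod

/-! Nonsolvable length -/

/-- A group is (isomorphic to) a direct product of non-abelian simple groups. -/
def IsNonabelianSemisimple (Q : Type*) [Group Q] : Prop :=
  ∃ (ι : Type) (S : ι → Subgroup Q),
    Finite ι ∧ (∀ i, IsSimpleGroup (S i)) ∧ (∀ i, ¬ IsSolvable (S i)) ∧
      Nonempty (Q ≃* ((i : ι) → (S i)))

/-- The factor `K/H` of a normal series is solvable; equivalently some term of the
derived series of `K` is contained in `H`. -/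
def SolvableFactor {G : Type*} [Group G] (H K : Subgroup G) : Prop :=
  ∃ d : ℕ, (derivedSeries (↥K) d).map K.subtype ≤ H

/-- The factor `K/H` of a normal series is a direct product of non-abelian
simple groups. -/
def SemisimpleFactor {G : Type*} [Group G] (H K : Subgroup G) : Prop :=
  ∃ hn : (H.subgroupOf K).Normal,
    letI := hn
    IsNonabelianSemisimple (↥K ⧸ H.subgroupOf K)

/-- `G` has a normal series, each of whose factors is either solvable or a direct
product of non-abelian simple groups, with exactly `n` factors of the latter
(nonsolvable) kind. -/
def HasNSSeriesOfLength (G : Type*) [Group G] (n : ℕ) : Prop :=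
  ∃ (m : ℕ) (N : Fin (m + 1) → Subgroup G) (ns : Finset (Fin m)),
    N 0 = ⊥ ∧ N (Fin.last m) = ⊤ ∧ Monotone N ∧ (∀ i, (N i).Normal) ∧
    (∀ i : Fin m, i ∉ ns → SolvableFactor (N i.castSucc) (N i.succ)) ∧
    (∀ i : Fin m, i ∈ ns → SemisimpleFactor (N i.castSucc) (N i.succ)) ∧
    ns.card = n

/-- The nonsolvable length `λ(G)` of a group `G`: the minimal number of nonsolvable
factors in a normal series of `G` each of whose factors is either solvable or a
direct product of non-abelian simple groups. -/
noncomputable def nonsolvableLength (G : Type*) [Group G] : ℕ :=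
  sInf {n | HasNSSeriesOfLength G n}

/-- `ν(G)`: the length of a shortest non-trivial (reduced) law of `G`. -/
noncomputable def shortestLaw (G : Type*) [Group G] : ℕ :=
  sInf {n | ∃ (k : ℕ) (w : FreeGroup (Fin k)), w ≠ 1 ∧ wordLength w = n ∧
    ∀ g : Fin k → G, wordEval w g = 1}

lemma list_key {G : Type*} [Group G] {k : ℕ} (g b : Fin k → G) :
    ∀ (L : List (Fin k × Bool)) (t : G) (c : Fin L.length → G),
    (∀ j : Fin L.length, c j = if (L.get j).2
        then t * ((L.take (j : ℕ)).map fun y => if y.2 then g y.1 else (g y.1)⁻¹).prod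
        else t * ((L.take ((j : ℕ) + 1)).map fun y => if y.2 then g y.1 else (g y.1)⁻¹).prod) →
    t * (L.map fun y => if y.2 then b y.1 * g y.1 else (b y.1 * g y.1)⁻¹).prod =
      (List.ofFn fun j : Fin L.length =>
        if (L.get j).2 then c j * b (L.get j).1 * (c j)⁻¹
        else (c j * b (L.get j).1 * (c j)⁻¹)⁻¹).prod *
      (t * (L.map fun y => if y.2 then g y.1 else (g y.1)⁻¹).prod)
  | [], t, c, hc => by simp
  | (y :: L'), t, c, hc => by
      have ih := list_key g b L'
        (t * (if y.2 then g y.1 else (g y.1)⁻¹)) (fun j => c j.succ) (fun j => by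
        have h := hc j.succ
        simp only [List.get_cons_succ', Fin.val_succ, List.take_succ_cons, List.map_cons,
          List.prod_cons, mul_assoc] at h ⊢
        exact h)
      beta_reduce at ih
      have hc0 := hc (0 : Fin (L'.length + 1))
      have hT : (List.ofFn fun j : Fin L'.length =>
          if (L'.get j).2 then c j.succ * b (L'.get j).1 * (c j.succ)⁻¹
          else (c j.succ * b (L'.get j).1 * (c j.succ)⁻¹)⁻¹).prod =
          t * (if y.2 then g y.1 else (g y.1)⁻¹) *
          (L'.map fun y => if y.2 then b y.1 * g y.1 else (b y.1 * g y.1)⁻¹).prod *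
          ((L'.map fun y => if y.2 then g y.1 else (g y.1)⁻¹).prod)⁻¹ *
          (if y.2 then g y.1 else (g y.1)⁻¹)⁻¹ * t⁻¹ := by
        rw [ih]; group
      simp only [List.map_cons, List.prod_cons, List.length_cons, List.ofFn_succ,
        List.get_cons_zero, List.get_cons_succ', List.prod_cons]
      rw [hT]
      simp only [List.get_cons_zero, Fin.val_zero, List.take_zero, List.take_succ_cons,
        List.map_nil, List.prod_nil, mul_one, List.map_cons, List.prod_cons] at hc0
      rcases y with ⟨i, e⟩
      cases e <;>
        simp only [if_true, if_false, Bool.false_eq_true, Bool.true_eq_false, ite_true,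
          ite_false] at hc0 ⊢ <;> rw [hc0] <;> group


/-- Let `N ⊴ G`, let `w = y_1 ⋯ y_n` be a non-trivial reduced word (with `y_j = x_{i_j}^{ε_j}`),
and let `ḡ ∈ G^k`, `b̄ ∈ N^k`.  Then
`w(b̄ḡ) = a_1^{ε_1} ⋯ a_n^{ε_n} ⋅ w(ḡ)` where `a_j = (b_{i_j})^{w̃_j(ḡ)}`, with
`w̃_j = w_j⁻¹` if `ε_j = -1` and `w̃_j = w_{j-1}⁻¹` if `ε_j = +1`;
in particular `w(b̄ḡ) ∈ N ⋅ w(ḡ)`.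
(Here, for a letter `y = (x_i, ε)` at (0-based) position `j` of the reduced word of `w`,
the conjugating element `w̃_j(ḡ)⁻¹` is `w_j(ḡ)` if `ε = +1` and `w_{j+1}(ḡ)` if `ε = -1`,
in 0-based indexing, so that `a_j = w̃_j(ḡ)⁻¹ ⋅ b_{i_j} ⋅ w̃_j(ḡ)`.) -/
theorem wordEval_mul_tuple_eq {G : Type*} [Group G] {N : Subgroup G} (hN : N.Normal)
    {k : ℕ} (w : FreeGroup (Fin k)) (hw : w ≠ 1)
    (g b : Fin k → G) (hb : ∀ i, b i ∈ N) :
    wordEval w (fun i => b i * g i) =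
      (List.ofFn fun j : Fin (FreeGroup.toWord w).length =>
        (fun y : Fin k × Bool =>
          (fun t : G =>
            if y.2 then t * b y.1 * t⁻¹ else (t * b y.1 * t⁻¹)⁻¹)
          (if y.2 then partialEval w g (j : ℕ) else partialEval w g ((j : ℕ) + 1)))
        ((FreeGroup.toWord w).get j)).prod * wordEval w g ∧
    wordEval w (fun i => b i * g i) * (wordEval w g)⁻¹ ∈ N := by
  have hE : ∀ (h : Fin k → G), wordEval w h =
      ((FreeGroup.toWord w).map fun y => if y.2 then h y.1 else (h y.1)⁻¹).prod := by
    intro h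
    have : wordEval w h = FreeGroup.lift h (FreeGroup.mk (FreeGroup.toWord w)) := by
      rw [FreeGroup.mk_toWord]; rfl
    rw [this, FreeGroup.lift_mk]
    simp [Bool.cond_eq_ite]
  have key := list_key g b (FreeGroup.toWord w) 1
    (fun j => if ((FreeGroup.toWord w).get j).2 then partialEval w g (j : ℕ)
      else partialEval w g ((j : ℕ) + 1))
    (fun j => by simp only [partialEval, one_mul])
  simp only [one_mul] at key
  have main : wordEval w (fun i => b i * g i) =
      (List.ofFn fun j : Fin (FreeGroup.toWord w).length =>
        (fun y : Fin k × Bool =>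
          (fun t : G =>
            if y.2 then t * b y.1 * t⁻¹ else (t * b y.1 * t⁻¹)⁻¹)
          (if y.2 then partialEval w g (j : ℕ) else partialEval w g ((j : ℕ) + 1)))
        ((FreeGroup.toWord w).get j)).prod * wordEval w g := by
    rw [hE, hE]
    exact key
  refine ⟨main, ?_⟩
  rw [main, mul_inv_cancel_right]
  apply Subgroup.list_prod_mem
  intro x hx
  rw [List.mem_ofFn] at hx
  obtain ⟨j, rfl⟩ := hx
  simp only
  split
  · exact hN.conj_mem _ (hb _) _
  · exact N.inv_mem (hN.conj_mem _ (hb _) _)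
end

section
/- Let G ≤ Sym(Ω) be a finite transitive permutation group with a non-trivial normal subgroup M* = ∏_{i=0}^m M_i, where the subgroups M_i are permuted transitively by G under conjugation. Let ω ∈ Ω, and let R be a subgroup of H = N_G(M_0) containing (G_ω ∩ H)·M̂_0, where M̂_0 = ∏_{i≠0} M_i. If W is an irreducible constituent of the induced module Ind_R^H(ℂ) on which M_0 acts non-trivially, then the permutation module ℂΩ has a submodule isomorphic to V = Ind_H^G(W). -/
/-! Induced representations (function model).  For a subgroup `H ≤ G` and an
`F`-linear representation `ρ` of `H` on `W`, the induced `F G`-module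
`Ind_H^G(W) = W ⊗_{F H} F G` is modelled (for `G` finite) by the space of functions
`f : G → W` with `f (h * g) = ρ h (f g)`, on which `G` acts by `(x • f) g = f (g * x)`. -/

section Induced

variable (F : Type*) [Field F] (G : Type*) [Group G] (H : Subgroup G)
  (W : Type*) [AddCommGroup W] [Module F W] (ρ : Representation F (↥H) W)

/-- The carrier of the induced module `Ind_H^G(W)`, as a subspace of `G → W`. -/
def inducedCarrier : Submodule F (G → W) where
  carrier := {f | ∀ (h : ↥H) (g : G), f (↑h * g) = ρ h (f g)}
  add_mem' := by
    intro f₁ f₂ h1 h2 h g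
    simp only [Pi.add_apply, h1 h g, h2 h g, map_add]
  zero_mem' := by
    intro h g
    simp
  smul_mem' := by
    intro c f hf h g
    simp only [Pi.smul_apply, hf h g, map_smul]

/-- The representation of `G` on the induced module `Ind_H^G(W)`. -/
def inducedRep : Representation F G ↥(inducedCarrier F G H W ρ) where
  toFun x :=
    { toFun := fun f => ⟨fun g => (f : G → W) (g * x), by
        intro h g
        show (f : G → W) ((↑h * g) * x) = ρ h ((f : G → W) (g * x))
        rw [mul_assoc]
        exact f.2 h (g * x)⟩
      map_add' := fun f₁ f₂ => Subtype.ext (funext fun g => rfl)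
      map_smul' := fun c f => Subtype.ext (funext fun g => rfl) }
  map_one' := by
    apply LinearMap.ext
    intro f
    apply Subtype.ext
    funext g
    simp
  map_mul' := by
    intro x y
    apply LinearMap.ext
    intro f
    apply Subtype.ext
    funext g
    simp [mul_assoc]

/-- The canonical copy `w ↦ w ⊗ 1` of `W` inside the induced module `Ind_H^G(W)`:
the function supported on `H` with value `ρ h w` at `h ∈ H`. -/
noncomputable def inducedUnit (z : W) : ↥(inducedCarrier F G H W ρ) := by
  classical
  exact ⟨fun g => if hg : g ∈ H then ρ ⟨g, hg⟩ z else 0, by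
    intro h g
    dsimp only
    by_cases hg : g ∈ H
    · rw [dif_pos hg, dif_pos (mul_mem h.2 hg)]
      have : (⟨↑h * g, mul_mem h.2 hg⟩ : ↥H) = h * ⟨g, hg⟩ := rfl
      rw [this, map_mul]
      rfl
    · rw [dif_neg hg, dif_neg, map_zero]
      intro hmem
      exact hg (by simpa using mul_mem (inv_mem h.2) hmem)⟩

end Induced

/-- A representation is irreducible if the space is non-zero and has no invariant
subspaces other than `⊥` and `⊤`. -/
def RepIrreducible {F G W : Type*} [Field F] [Group G] [AddCommGroup W] [Module F W]
    (ρ : Representation F G W) : Prop :=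
  (∃ w : W, w ≠ 0) ∧
    ∀ U : Submodule F W, (∀ (g : G), ∀ w ∈ U, ρ g w ∈ U) → U = ⊥ ∨ U = ⊤

/-- The permutation representation of `G` on the complex permutation module
`ℂΩ = (Ω → F)`, given by `(g • f) x = f (g⁻¹ • x)`. -/
def permRep (F : Type*) [Field F] (G : Type*) [Group G] (Ω : Type*) [MulAction G Ω] :
    Representation F G (Ω → F) where
  toFun x :=
    { toFun := fun f => fun ωx => f (x⁻¹ • ωx)
      map_add' := fun f₁ f₂ => rfl
      map_smul' := fun c f => rfl }
  map_one' := by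
    apply LinearMap.ext
    intro f
    funext ωx
    simp
  map_mul' := by
    intro x y
    apply LinearMap.ext
    intro f
    funext ωx
    simp [mul_smul]


lemma sum_subgroup_shift {G : Type*} [Group G] [Fintype G] (S : Subgroup G)
    [Fintype ↥S] (v : G → ℂ) (y : G) [DecidablePred (fun g : G => g * y⁻¹ ∈ S)]
    [Fintype {g : G // g * y⁻¹ ∈ S}] :
    ∑ s : ↥S, v (↑s * y) = ∑ g : G, if g * y⁻¹ ∈ S then v g else 0 := by
  have e1 : (∑ g : G, if g * y⁻¹ ∈ S then v g else 0)
      = ∑ g : {g : G // g * y⁻¹ ∈ S}, v ↑g := by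
    rw [← Finset.sum_filter]
    exact Finset.sum_subtype _ (by intro x; simp) _
  rw [e1]
  refine Fintype.sum_equiv
    (⟨fun s => ⟨(↑s : G) * y, by simp [s.2]⟩,
      fun g => ⟨(↑g : G) * y⁻¹, g.2⟩,
      fun s => by ext; simp,
      fun g => by ext; simp⟩ : ↥S ≃ {g : G // g * y⁻¹ ∈ S})
    _ _ (fun s => rfl)

open Classical in
lemma comb_core {G : Type*} [Group G] [Fintype G] {Ω : Type*} [MulAction G Ω]
    {m : ℕ} (M : Fin (m + 1) → Subgroup G) (ω : Ω) (R : Subgroup G)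
    (hperm : ∀ (g : G) (i : Fin (m + 1)), ∃ j, (M i).map (MulAut.conj g).toMonoidHom = M j)
    (hstab : (MulAction.stabilizer G ω ⊓ (Subgroup.normalizer (M 0 : Set G))) ≤ R)
    (hhat : (⨆ j ∈ ({0}ᶜ : Set (Fin (m + 1))), M j) ≤ R)
    (u : G → ℂ)
    (ha : ∀ r ∈ R, ∀ y, u (r * y) = u y)
    (hb : ∀ y, ∑ s : ↥(M 0), u (↑s * y) = 0)
    (hc : ∀ y, ∑ g : ↥(MulAction.stabilizer G ω), u (↑g * y) = 0) :
    ∀ y, u y = 0 := by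
  classical
  -- Sublemma: sums over subgroups containing M 0 vanish
  have sub1 : ∀ (S : Subgroup G), M 0 ≤ S → ∀ z, ∑ s : ↥S, u (↑s * z) = 0 := by
    intro S hS z
    have h1 : ∑ t : ↥(M 0), ∑ s : ↥S, u (↑t * (↑s * z)) = 0 := by
      rw [Finset.sum_comm]
      exact Finset.sum_eq_zero fun s _ => hb _
    have h2 : ∀ t : ↥(M 0), (∑ s : ↥S, u (↑t * (↑s * z))) = ∑ s : ↥S, u (↑s * z) := by
      intro t
      refine Fintype.sum_equiv (Equiv.mulLeft (⟨↑t, hS t.2⟩ : ↥S)) _ _ fun s => ?_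
      simp [Equiv.coe_mulLeft, mul_assoc]
    rw [Finset.sum_congr rfl (fun t _ => h2 t), Finset.sum_const, Finset.card_univ,
      nsmul_eq_mul] at h1
    rcases mul_eq_zero.mp h1 with h | h
    · exact absurd h (by exact_mod_cast Fintype.card_ne_zero)
    · exact h
  intro y
  set Mhat : Subgroup G := ⨆ j ∈ ({0}ᶜ : Set (Fin (m + 1))), M j with hMhatdef
  have key : ∑ g : ↥(MulAction.stabilizer G ω), ∑ mm : ↥Mhat, u (↑g * (↑mm * y)) = 0 := by
    rw [Finset.sum_comm]
    exact Finset.sum_eq_zero fun mm _ => hc _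
  have eval : ∀ g : ↥(MulAction.stabilizer G ω),
      (∑ mm : ↥Mhat, u (↑g * (↑mm * y))) =
        if (↑g : G) ∈ (Subgroup.normalizer (M 0 : Set G)) then (Fintype.card ↥Mhat : ℂ) * u y else 0 := by
    intro g
    by_cases hg : (↑g : G) ∈ (Subgroup.normalizer (M 0 : Set G))
    · rw [if_pos hg]
      have hgu : ∀ mm : ↥Mhat, u (↑g * (↑mm * y)) = u y := by
        intro mm
        rw [ha ↑g (hstab ⟨g.2, hg⟩) _, ha ↑mm (hhat mm.2) y]
      rw [Finset.sum_congr rfl (fun mm _ => hgu mm), Finset.sum_const, Finset.card_univ,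
        nsmul_eq_mul]
    · rw [if_neg hg]
      set S : Subgroup G := Mhat.map (MulAut.conj (↑g : G)).toMonoidHom with hSdef
      have hMS : M 0 ≤ S := by
        obtain ⟨k, hk⟩ := hperm ((↑g : G))⁻¹ 0
        have hk0 : k ≠ 0 := by
          intro h0
          subst h0
          apply hg
          rw [Subgroup.mem_normalizer_iff]
          intro x
          constructor
          · intro hx
            obtain ⟨a, ha', hax⟩ :=
              (hk.symm ▸ hx : x ∈ (M 0).map (MulAut.conj ((↑g : G))⁻¹).toMonoidHom)
            have hax' : ((↑g : G))⁻¹ * a * ((↑g : G))⁻¹⁻¹ = x := by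
              simpa [MulAut.conj_apply] using hax
            have hxa : (↑g : G) * x * (↑g : G)⁻¹ = a := by rw [← hax']; group
            rw [hxa]; exact ha'
          · intro hx
            have hmem : x ∈ (M 0).map (MulAut.conj ((↑g : G))⁻¹).toMonoidHom :=
              ⟨(↑g : G) * x * (↑g : G)⁻¹, hx, by simp [MulAut.conj_apply, mul_assoc]⟩
            rw [hk] at hmem; exact hmem
        intro x hx
        have hx2 : ((↑g : G))⁻¹ * x * (↑g : G) ∈ M k := by
          rw [← hk]
          exact ⟨x, hx, by simp [MulAut.conj_apply]⟩
        have hx3 : ((↑g : G))⁻¹ * x * (↑g : G) ∈ Mhat :=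
          (le_iSup₂ (f := fun j (_ : j ∈ ({0}ᶜ : Set (Fin (m + 1)))) => M j) k hk0) hx2
        exact ⟨_, hx3, by simp [MulAut.conj_apply, mul_assoc]⟩
      have h4 : (∑ mm : ↥Mhat, u (↑g * (↑mm * y))) = ∑ s : ↥S, u (↑s * ((↑g : G) * y)) := by
        refine Fintype.sum_equiv ((MulEquiv.subgroupMap (MulAut.conj (↑g : G)) Mhat).toEquiv)
          _ _ fun mm => ?_
        have hcoe : (((MulEquiv.subgroupMap (MulAut.conj (↑g : G)) Mhat).toEquiv mm : G))
            = (↑g : G) * ↑mm * (↑g : G)⁻¹ := by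
          simpa using MulEquiv.coe_subgroupMap_apply (MulAut.conj (↑g : G)) Mhat mm
        rw [hcoe]
        congr 1
        group
      rw [h4, sub1 S hMS]
  rw [Finset.sum_congr rfl (fun g _ => eval g), Finset.sum_ite, Finset.sum_const_zero,
    add_zero, Finset.sum_const, nsmul_eq_mul] at key
  have hcard : ((Finset.univ.filter
      (fun g : ↥(MulAction.stabilizer G ω) => (↑g : G) ∈ (Subgroup.normalizer (M 0 : Set G)))).card : ℂ) ≠ 0 := by
    have h1 : (1 : ↥(MulAction.stabilizer G ω)) ∈ Finset.univ.filter
        (fun g : ↥(MulAction.stabilizer G ω) => (↑g : G) ∈ (Subgroup.normalizer (M 0 : Set G))) := by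
      simp [Subgroup.one_mem]
    exact_mod_cast Finset.card_ne_zero_of_mem h1
  have hMhatcard : ((Fintype.card ↥Mhat : ℂ)) ≠ 0 := by
    exact_mod_cast Fintype.card_ne_zero
  rcases mul_eq_zero.mp key with h | h
  · exact absurd h hcard
  rcases mul_eq_zero.mp h with h' | h'
  · exact absurd h' hMhatcard
  · exact h'

/-- Let `G ≤ Sym(Ω)` be a finite transitive permutation group with a non-trivial normal
subgroup `M* = ∏_{i=0}^m M_i`, the `M_i` being permuted transitively by `G` under
conjugation.  Let `ω ∈ Ω` and let `R` be a subgroup of `H = N_G(M_0)` containing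
`(G_ω ∩ H)·M̂_0`, where `M̂_0 = ∏_{i ≠ 0} M_i`.  If `W` is an irreducible constituent of
`Ind_R^H(ℂ)` on which `M_0` acts non-trivially, then the permutation module `ℂΩ` has a
submodule isomorphic to `V = Ind_H^G(W)`; equivalently, there is an injective
`G`-equivariant linear map `V → ℂΩ`. -/
theorem perm_module_contains_induced {G : Type*} [Group G] [Finite G]
    {Ω : Type*} [Finite Ω] [MulAction G Ω] [FaithfulSMul G Ω]
    [MulAction.IsPretransitive G Ω]
    {m : ℕ} (M : Fin (m + 1) → Subgroup G)
    -- the `M i` form an internal direct product …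
    (hcomm : ∀ i j, i ≠ j → ∀ x ∈ M i, ∀ y ∈ M j, Commute x y)
    (hindep : ∀ i, M i ⊓ (⨆ j ∈ ({i}ᶜ : Set (Fin (m + 1))), M j) = ⊥)
    -- … which is a non-trivial normal subgroup of `G` …
    (hnormal : (⨆ i, M i).Normal) (hne : (⨆ i, M i) ≠ ⊥)
    -- … whose factors are permuted transitively by `G` under conjugation
    (hperm : ∀ (g : G) (i : Fin (m + 1)), ∃ j, (M i).map (MulAut.conj g).toMonoidHom = M j)
    (htrans : ∀ i j, ∃ g : G, (M i).map (MulAut.conj g).toMonoidHom = M j)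
    (ω : Ω)
    -- `R` is a subgroup of `H = N_G(M_0)` containing `(G_ω ∩ H) ⬝ M̂_0`
    (R : Subgroup G) (hRH : R ≤ (Subgroup.normalizer (M 0 : Set G)))
    (hRcont : (MulAction.stabilizer G ω ⊓ (Subgroup.normalizer (M 0 : Set G))) ⊔
      (⨆ j ∈ ({0}ᶜ : Set (Fin (m + 1))), M j) ≤ R)
    -- `W` is an irreducible constituent of `Ind_R^H(ℂ)` …
    {W : Type*} [AddCommGroup W] [Module ℂ W]
    (ρ : Representation ℂ ↥(Subgroup.normalizer (M 0 : Set G)) W) (hirr : RepIrreducible ρ)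
    (ι : W →ₗ[ℂ] ↥(inducedCarrier ℂ ↥(Subgroup.normalizer (M 0 : Set G)) (R.subgroupOf (Subgroup.normalizer (M 0 : Set G))) ℂ
      (Representation.trivial ℂ (G := ↥(R.subgroupOf (Subgroup.normalizer (M 0 : Set G)))) (V := ℂ))))
    (hι : Function.Injective ι)
    (hιequiv : ∀ (h : ↥(Subgroup.normalizer (M 0 : Set G))) (v : W),
      ι (ρ h v) = inducedRep ℂ ↥(Subgroup.normalizer (M 0 : Set G)) (R.subgroupOf (Subgroup.normalizer (M 0 : Set G))) ℂ
        (Representation.trivial ℂ (G := ↥(R.subgroupOf (Subgroup.normalizer (M 0 : Set G)))) (V := ℂ)) h (ι v))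
    -- … on which `M_0` acts non-trivially
    (hM0 : ∃ x : ↥(Subgroup.normalizer (M 0 : Set G)), (x : G) ∈ M 0 ∧ ρ x ≠ 1) :
    ∃ θ : ↥(inducedCarrier ℂ G (Subgroup.normalizer (M 0 : Set G)) W ρ) →ₗ[ℂ] (Ω → ℂ),
      Function.Injective θ ∧
      ∀ (x : G) (v : ↥(inducedCarrier ℂ G (Subgroup.normalizer (M 0 : Set G)) W ρ)),
        θ (inducedRep ℂ G (Subgroup.normalizer (M 0 : Set G)) W ρ x v) = permRep ℂ G Ω x (θ v) := by
  classical
  have _instG : Fintype G := Fintype.ofFinite G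
  -- the evaluation functional
  let lam : W →ₗ[ℂ] ℂ :=
    { toFun := fun w => (ι w).1 1
      map_add' := by intro a b; simp
      map_smul' := by intro c a; simp }
  have hlam : ∀ (h : ↥(Subgroup.normalizer (M 0 : Set G))) (w : W), lam (ρ h w) = (ι w).1 h := by
    intro h w
    show (ι (ρ h w)).1 1 = (ι w).1 h
    rw [hιequiv h w]
    show (ι w).1 (1 * h) = (ι w).1 h
    rw [one_mul]
  have hlamR : ∀ (h : ↥(Subgroup.normalizer (M 0 : Set G))), (h : G) ∈ R → ∀ w, lam (ρ h w) = lam w := by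
    intro h hr w
    rw [hlam]
    have h2 := (ι w).2 (⟨h, by simpa [Subgroup.mem_subgroupOf] using hr⟩ :
      ↥(R.subgroupOf (Subgroup.normalizer (M 0 : Set G)))) 1
    simp at h2; exact h2
  -- averaging over M 0 kills W
  have hMle : M 0 ≤ (Subgroup.normalizer (M 0 : Set G)) := Subgroup.le_normalizer
  set inc : ↥(M 0) →* ↥(Subgroup.normalizer (M 0 : Set G)) := Subgroup.inclusion hMle with hinc
  have claimA : ∀ w : W, ∑ s : ↥(M 0), ρ (inc s) w = 0 := by
    have hUdef : ∀ (U : Submodule ℂ W), U = ⊥ → ∀ w ∈ U, w = 0 := by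
      intro U hU w hw; rw [hU] at hw; simpa using hw
    let U : Submodule ℂ W :=
      { carrier := {w | ∀ s : ↥(M 0), ρ (inc s) w = w}
        add_mem' := by intro a b ha hb s; simp [map_add, ha s, hb s]
        zero_mem' := by intro s; simp
        smul_mem' := by intro c a ha s; simp [map_smul, ha s] }
    have hUinv : ∀ (h : ↥(Subgroup.normalizer (M 0 : Set G))), ∀ w ∈ U, ρ h w ∈ U := by
      intro h w hw s
      have hmem : ((h : G))⁻¹ * ↑s * (h : G) ∈ M 0 := by
        have h1 : ((h : G))⁻¹ ∈ (Subgroup.normalizer (M 0 : Set G)) := inv_mem h.2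
        have := (Subgroup.mem_normalizer_iff.mp h1 (↑s)).mp s.2
        simpa using this
      have hw' : ∀ t : ↥(M 0), ρ (inc t) w = w := hw
      have key : inc s * h = h * inc ⟨((h : G))⁻¹ * ↑s * (h : G), hmem⟩ := by
        apply Subtype.ext
        simp only [hinc, Subgroup.coe_mul, Subgroup.coe_inclusion]
        group
      have hcomp : ρ (inc s) (ρ h w) =
          ρ h (ρ (inc ⟨((h : G))⁻¹ * ↑s * (h : G), hmem⟩) w) := by
        rw [← Module.End.mul_apply, ← map_mul, key, map_mul, Module.End.mul_apply]
      show ρ (inc s) (ρ h w) = ρ h w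
      rw [hcomp, hw' ⟨((h : G))⁻¹ * ↑s * (h : G), hmem⟩]
    rcases hirr.2 U hUinv with hU | hU
    · intro w
      refine hUdef U hU _ ?_
      intro t
      show ρ (inc t) (∑ s : ↥(M 0), ρ (inc s) w) = ∑ s : ↥(M 0), ρ (inc s) w
      rw [map_sum]
      refine Fintype.sum_equiv (Equiv.mulLeft t) _ _ fun s => ?_
      rw [← Module.End.mul_apply, ← map_mul, ← map_mul]
      simp [Equiv.coe_mulLeft]
    · exfalso
      obtain ⟨x, hxM, hxρ⟩ := hM0
      apply hxρ
      apply LinearMap.ext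
      intro w
      have hw : w ∈ U := by rw [hU]; exact Submodule.mem_top
      have hw' : ∀ t : ↥(M 0), ρ (inc t) w = w := hw
      have h3 := hw' ⟨(x : G), hxM⟩
      have h4 : inc ⟨(x : G), hxM⟩ = x := Subtype.ext rfl
      rw [h4] at h3
      simpa using h3
  -- the G-map θ
  refine ⟨{ toFun := fun f => fun α => ∑ g : G, if g • α = ω then lam (f.1 g) else 0
            map_add' := ?_
            map_smul' := ?_ }, ?_, ?_⟩
  · intro f₁ f₂
    funext α
    simp only [Pi.add_apply, ← Finset.sum_add_distrib]
    refine Finset.sum_congr rfl fun g _ => ?_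
    by_cases hgα : g • α = ω <;> simp [hgα]
  · intro c f
    funext α
    simp only [RingHom.id_apply, Pi.smul_apply, smul_eq_mul, Finset.mul_sum]
    refine Finset.sum_congr rfl fun g _ => ?_
    by_cases hgα : g • α = ω <;> simp [hgα]
  · -- injectivity
    rw [← LinearMap.ker_eq_bot, LinearMap.ker_eq_bot']
    intro f hf
    have hmemprop : ∀ (h : ↥(Subgroup.normalizer (M 0 : Set G))) (g : G), f.1 (↑h * g) = ρ h (f.1 g) :=
      fun h g => f.2 h g
    have ha : ∀ r ∈ R, ∀ y : G, lam (f.1 (r * y)) = lam (f.1 y) := by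
      intro r hr y
      rw [show f.1 (r * y) = ρ ⟨r, hRH hr⟩ (f.1 y) from hmemprop ⟨r, hRH hr⟩ y,
        hlamR ⟨r, hRH hr⟩ hr]
    have hb : ∀ y : G, ∑ s : ↥(M 0), lam (f.1 (↑s * y)) = 0 := by
      intro y
      have h5 : ∀ s : ↥(M 0), lam (f.1 (↑s * y)) = lam (ρ (inc s) (f.1 y)) := by
        intro s
        rw [show f.1 (↑s * y) = ρ (inc s) (f.1 y) from hmemprop (inc s) y]
      rw [Finset.sum_congr rfl fun s _ => h5 s, ← map_sum, claimA (f.1 y), map_zero]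
    have hc : ∀ y : G, ∑ g : ↥(MulAction.stabilizer G ω), lam (f.1 (↑g * y)) = 0 := by
      intro y
      rw [sum_subgroup_shift (MulAction.stabilizer G ω) (fun g => lam (f.1 g)) y]
      have hmain : (∑ g : G, if g * y⁻¹ ∈ MulAction.stabilizer G ω then lam (f.1 g) else 0)
          = ∑ g : G, if g • (y⁻¹ • ω) = ω then lam (f.1 g) else 0 := by
        refine Finset.sum_congr rfl fun g _ => ?_
        by_cases hmem : g * y⁻¹ ∈ MulAction.stabilizer G ω
        · rw [if_pos hmem, if_pos (show g • (y⁻¹ • ω) = ω by rw [smul_smul]; exact hmem)]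
        · rw [if_neg hmem, if_neg (show ¬ (g • (y⁻¹ • ω) = ω) from fun hcon =>
            hmem (by rw [MulAction.mem_stabilizer_iff, ← smul_smul]; exact hcon))]
      rw [hmain]
      exact congrFun hf (y⁻¹ • ω)
    have hzero := comb_core M ω R hperm
      (le_trans le_sup_left hRcont) (le_trans le_sup_right hRcont)
      (fun y => lam (f.1 y)) ha hb hc
    apply Subtype.ext
    funext x
    have hval : f.1 x = 0 := by
      apply hι
      rw [map_zero]
      apply Subtype.ext
      funext h
      simp only [ZeroMemClass.coe_zero, Pi.zero_apply]
      show (ι (f.1 x)).1 h = 0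
      rw [← hlam h (f.1 x), ← hmemprop h x]
      exact hzero (↑h * x)
    simpa using hval
  · -- equivariance
    intro x v
    funext α
    show (∑ g : G, if g • α = ω then lam (v.1 (g * x)) else 0)
        = (∑ g : G, if g • (x⁻¹ • α) = ω then lam (v.1 g) else 0)
    refine Fintype.sum_equiv (Equiv.mulRight x) _ _ fun g => ?_
    show (if g • α = ω then lam (v.1 (g * x)) else 0)
        = (if ((Equiv.mulRight x) g) • (x⁻¹ • α) = ω then lam (v.1 ((Equiv.mulRight x) g)) else 0)
    simp only [Equiv.coe_mulRight]
    by_cases hgα : g • α = ω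
    · rw [if_pos hgα]; exact (if_pos (show (g * x) • (x⁻¹ • α) = ω by
        rw [smul_smul, mul_inv_cancel_right]; exact hgα)).symm
    · rw [if_neg hgα]; exact (if_neg (show ¬ ((g * x) • (x⁻¹ • α) = ω) from fun hcon =>
        hgα (by rw [smul_smul, mul_inv_cancel_right] at hcon; exact hcon))).symm
end
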